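/- Crossing points of a doubly symmetric resonant orbit: let c(t) = (x(t), z(t)) be a continuously differentiable mT-periodic solution of the perturbed Rayleigh–Bénard system whose minimal period among the multiples of T is mT, fix an integer a, and suppose the trajectory C = {c(t) : t ∈ ℝ} is invariant under both reflections (x,z) ↦ ((2a+1)π/k − x, z) and (x,z) ↦ (x, 1 − z), and avoids the cell center ((2a+1)π/(2k), 1/2). Then there exist times t₃, t₄ ∈ [0, mT) with t₃ ≠ t₄ such that z(t₃) = z(t₄) = 1/2 and x(t₃) + x(t₄) = (2a+1)π/k; that is, the orbit crosses the horizontal center line z = 1/2 at two points that are reflections of each other through the vertical center line x = (2a+1)π/(2k). -/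
import Mathlib


/-- A solution of the perturbed Rayleigh–Bénard system with parameters `A, k, ε, ω`. -/
def IsPerturbedRBSolution (A k ε ω : ℝ) (x z : ℝ → ℝ) : Prop :=
  (∀ t : ℝ, HasDerivAt x
    (-(A * Real.pi / k) * Real.sin (k * x t) * Real.cos (Real.pi * z t)
      - ε * A * Real.pi * Real.cos (ω * t) * Real.cos (k * x t) * Real.cos (Real.pi * z t)) t)
  ∧ (∀ t : ℝ, HasDerivAt z
    (A * Real.cos (k * x t) * Real.sin (Real.pi * z t)
      - ε * A * k * Real.cos (ω * t) * Real.sin (k * x t) * Real.sin (Real.pi * z t)) t)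

/-- Reduction of a time to the fundamental period interval, preserving both
coordinates of a periodic curve. -/
lemma periodic_reduce (f g : ℝ → ℝ) (c : ℝ) (hc : 0 < c)
    (hf : Function.Periodic f c) (hg : Function.Periodic g c) (t : ℝ) :
    ∃ t', t' ∈ Set.Ico (0 : ℝ) c ∧ f t' = f t ∧ g t' = g t :=
  ⟨t - ⌊t / c⌋ * c, ⟨Int.sub_floor_div_mul_nonneg t hc, Int.sub_floor_div_mul_lt t hc⟩,
    hf.sub_int_mul_eq ⌊t / c⌋, hg.sub_int_mul_eq ⌊t / c⌋⟩

/-- Crossing points of a doubly symmetric resonant orbit: a continuously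
differentiable `mT`-periodic solution whose trajectory is invariant under both
reflections through the center lines of the cell and avoids the cell center crosses
the horizontal center line `z = 1/2` at two distinct times in `[0, mT)`, at points
that are reflections of each other through the vertical center line
`x = (2a+1)π/(2k)`. -/
theorem perturbedRB_crossing_points (A k ε T ω : ℝ)
    (hA : 0 < A) (hk : 0 < k) (hT : 0 < T) (hω : ω = 2 * Real.pi / T)
    (x z : ℝ → ℝ)
    (hC1x : ContDiff ℝ 1 x) (hC1z : ContDiff ℝ 1 z)
    (hsol : IsPerturbedRBSolution A k ε ω x z)
    (m : ℕ) (hm : 1 ≤ m)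
    (hper : ∀ t : ℝ, x (t + (m : ℝ) * T) = x t ∧ z (t + (m : ℝ) * T) = z t)
    (hmin : ∀ l : ℕ, 1 ≤ l → l ≤ m - 1 →
      (x ((l : ℝ) * T), z ((l : ℝ) * T)) ≠ (x 0, z 0))
    (a : ℤ)
    (hsymV : (fun p : ℝ × ℝ => ((2 * (a : ℝ) + 1) * Real.pi / k - p.1, p.2)) ''
        Set.range (fun t => (x t, z t)) = Set.range (fun t => (x t, z t)))
    (hsymH : (fun p : ℝ × ℝ => (p.1, 1 - p.2)) ''
        Set.range (fun t => (x t, z t)) = Set.range (fun t => (x t, z t)))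
    (hcenter : ∀ t : ℝ,
      (x t, z t) ≠ ((2 * (a : ℝ) + 1) * Real.pi / (2 * k), 1 / 2)) :
    ∃ t₃ t₄ : ℝ, t₃ ∈ Set.Ico (0 : ℝ) ((m : ℝ) * T) ∧ t₄ ∈ Set.Ico (0 : ℝ) ((m : ℝ) * T)
      ∧ t₃ ≠ t₄ ∧ z t₃ = 1 / 2 ∧ z t₄ = 1 / 2
      ∧ x t₃ + x t₄ = (2 * (a : ℝ) + 1) * Real.pi / k := by
  have hc : (0 : ℝ) < (m : ℝ) * T := by
    have : (0 : ℝ) < (m : ℝ) := by exact_mod_cast Nat.lt_of_lt_of_le Nat.zero_lt_one hm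
    exact mul_pos this hT
  have hperx : Function.Periodic x ((m : ℝ) * T) := fun t => (hper t).1
  have hperz : Function.Periodic z ((m : ℝ) * T) := fun t => (hper t).2
  -- Step 1: there is a time `t₁` with `z t₁ = 1/2`.
  have hmemH : (x 0, 1 - z 0) ∈ Set.range (fun t => (x t, z t)) := by
    rw [← hsymH]
    exact Set.mem_image_of_mem _ (Set.mem_range_self 0)
  obtain ⟨s, hs⟩ := hmemH
  have hxs : x s = x 0 := congrArg Prod.fst hs
  have hzs : z s = 1 - z 0 := congrArg Prod.snd hs
  have hcontz : ContinuousOn z (Set.uIcc 0 s) := hC1z.continuous.continuousOn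
  have hhalf : (1 : ℝ) / 2 ∈ Set.uIcc (z 0) (z s) := by
    rw [Set.mem_uIcc]
    rcases le_or_gt (z 0) (1 / 2) with h | h
    · exact Or.inl ⟨h, by rw [hzs]; linarith⟩
    · exact Or.inr ⟨by rw [hzs]; linarith, h.le⟩
  obtain ⟨t₁, _, ht₁⟩ := intermediate_value_uIcc hcontz hhalf
  -- Step 2: reflect the crossing point through the vertical center line.
  have hmemV : ((2 * (a : ℝ) + 1) * Real.pi / k - x t₁, z t₁) ∈
      Set.range (fun t => (x t, z t)) := by
    rw [← hsymV]
    exact Set.mem_image_of_mem _ (Set.mem_range_self t₁)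
  obtain ⟨s₂, hs₂⟩ := hmemV
  have hxs₂ : x s₂ = (2 * (a : ℝ) + 1) * Real.pi / k - x t₁ := congrArg Prod.fst hs₂
  have hzs₂ : z s₂ = z t₁ := congrArg Prod.snd hs₂
  -- The two crossing points are distinct, since the orbit avoids the center.
  have hne : x t₁ ≠ x s₂ := by
    intro h
    apply hcenter t₁
    have hk0 : k ≠ 0 := ne_of_gt hk
    have : x t₁ = (2 * (a : ℝ) + 1) * Real.pi / (2 * k) := by
      rw [hxs₂] at h
      field_simp at h ⊢
      linarith
    rw [this, ht₁]
  -- Step 3: reduce both times to `[0, mT)`.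
  obtain ⟨t₃, ht₃mem, hxt₃, hzt₃⟩ := periodic_reduce x z _ hc hperx hperz t₁
  obtain ⟨t₄, ht₄mem, hxt₄, hzt₄⟩ := periodic_reduce x z _ hc hperx hperz s₂
  refine ⟨t₃, t₄, ht₃mem, ht₄mem, ?_, by rw [hzt₃, ht₁], by rw [hzt₄, hzs₂, ht₁], ?_⟩
  · intro h
    apply hne
    rw [← hxt₃, ← hxt₄, h]
  · rw [hxt₃, hxt₄, hxs₂]; ring
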